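/- Let n ≥ 12 and suppose there exist k ≥ 2 distinct integers 1 < d₁ < d₂ < ... < d_k whose sum is at most n. Let λ be a partition of n with λ₁ ≥ λ₁' ≥ 2, and let μ be the partition of m := n - d₁ obtained from λ by removing the first corner d₁ times successively. If n - λ₁ < k, then λ₁ - λ₂ ≥ d₁ and m - μ₁ = n - λ₁. -/

import Mathlib

/-- `l` is a partition of `n`: a weakly decreasing list of positive integers with sum `n`. -/
def IsPartitionOf (n : ℕ) (l : List ℕ) : Prop :=
  l.Pairwise (· ≥ ·) ∧ (∀ x ∈ l, 0 < x) ∧ l.sum = n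

/-- Remove the corner box lying at the end of the last row whose length is at least `b`
(used with `b` a part of `l`: this removes a box from the last row of length `b`). -/
def removeCornerAt (l : List ℕ) (b : ℕ) : List ℕ :=
  (l.set (l.countP (fun x => decide (b ≤ x)) - 1) (b - 1)).filter (fun x => decide (0 < x))

/-- Remove the first corner: the corner lying in a longest row. -/
def removeFirstCorner (l : List ℕ) : List ℕ := removeCornerAt l (l.headD 0)

/-- The second largest distinct part of `l`. -/
def secondVal (l : List ℕ) : ℕ := (l.filter (fun x => decide (x < l.headD 0))).headD 0

/-- Remove the second corner: the corner lying in a row whose length is the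
second largest among the row lengths. -/
def removeSecondCorner (l : List ℕ) : List ℕ := removeCornerAt l (secondVal l)

/-- The conjugate (transpose) partition. -/
def conjugatePartition (l : List ℕ) : List ℕ :=
  (List.range (l.headD 0)).map (fun j => l.countP (fun x => decide (j < x)))

/-- Value of the permutation character of `S_n` acting on colorings of `Fin n`
with fiber sizes given by the composition `mu` (the character induced from the
trivial character of the Young subgroup `S_{mu}`). -/
noncomputable def youngPermChar {n : ℕ} (mu : List ℕ) (σ : Equiv.Perm (Fin n)) : ℤ :=
  (Set.ncard {f : Fin n → ℕ |
    (∀ i, f (σ i) = f i) ∧ ∀ j : ℕ, Set.ncard {i : Fin n | f i = j} = mu.getD j 0} : ℤ)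

/-- The irreducible character `χ^λ` of `S_n` associated with the partition `lam`,
defined by the Jacobi–Trudi determinant `χ^λ = det(h_{λ_i - i + j})`, expanded
as a signed sum over permutations of Young-subgroup permutation characters. -/
noncomputable def chiLambda {n : ℕ} (lam : List ℕ) (σ : Equiv.Perm (Fin n)) : ℤ :=
  ∑ w : Equiv.Perm (Fin lam.length),
    if ∀ i : Fin lam.length, (i : ℕ) ≤ lam.getD i 0 + (w i : ℕ) then
      ((Equiv.Perm.sign w : ℤ)) *
        youngPermChar ((List.finRange lam.length).map
          (fun (i : Fin lam.length) => lam.getD (i : ℕ) 0 + ((w i : ℕ)) - (i : ℕ))) σ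
    else 0

/-- The cycle type of a permutation including fixed points as cycles of length 1. -/
def fullCycleType {n : ℕ} (σ : Equiv.Perm (Fin n)) : Multiset ℕ :=
  σ.cycleType + Multiset.replicate (n - σ.support.card) 1

open Polynomial


lemma removeFirstCorner_cons (h : ℕ) (t : List ℕ) (h2 : 2 ≤ h)
    (hlt : ∀ x ∈ t, x < h) (hpos : ∀ x ∈ t, 0 < x) :
    removeFirstCorner (h :: t) = (h - 1) :: t := by
  unfold removeFirstCorner removeCornerAt
  have hc : (h :: t).countP (fun x => decide (h ≤ x)) = 1 := by
    rw [List.countP_cons]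
    have h0 : t.countP (fun x => decide (h ≤ x)) = 0 := by
      rw [List.countP_eq_zero]
      intro x hx
      simpa using Nat.not_le.mpr (hlt x hx)
    simp [h0]
  have hd1 : (decide (0 < h - 1)) = true := by simp; omega
  rw [List.headD_cons, hc]
  simp only [Nat.sub_self, List.set_cons_zero, List.filter_cons, hd1, if_true]
  rw [List.filter_eq_self.mpr (fun x hx => by simpa using hpos x hx)]

lemma iterate_removeFirstCorner (j : ℕ) : ∀ (h : ℕ) (t : List ℕ), j < h →
    (∀ x ∈ t, 0 < x) → (∀ x ∈ t, x + j ≤ h) →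
    removeFirstCorner^[j] (h :: t) = (h - j) :: t := by
  induction j with
  | zero => intro h t _ _ _; simp
  | succ j ih =>
    intro h t hj hpos hle
    rw [Function.iterate_succ_apply, removeFirstCorner_cons h t (by omega)
      (fun x hx => by have := hle x hx; omega) hpos,
      ih (h - 1) t (by omega) hpos (fun x hx => by have := hle x hx; omega)]
    congr 1
    omega

theorem stmt2 (n k : ℕ) (hn : 12 ≤ n) (hk : 2 ≤ k)
    (d : Fin k → ℕ) (hdmono : StrictMono d) (hdgt : ∀ i, 1 < d i)
    (hsum : ∑ i, d i ≤ n)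
    (lam : List ℕ) (hlam : IsPartitionOf n lam)
    (hcol : lam.length ≤ lam.headD 0) (hcol2 : 2 ≤ lam.length)
    (μ : List ℕ) (hμ : μ = removeFirstCorner^[d ⟨0, by omega⟩] lam)
    (ht : (n : ℤ) - lam.headD 0 < k) :
    (d ⟨0, by omega⟩ : ℤ) ≤ (lam.headD 0 : ℤ) - lam.getD 1 0 ∧
    ((n : ℤ) - d ⟨0, by omega⟩) - μ.headD 0 = (n : ℤ) - lam.headD 0 := by
  obtain ⟨hsort, hpos, hsum_eq⟩ := hlam
  set i0 : Fin k := ⟨0, by omega⟩ with hi0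
  set a := d i0 with ha
  obtain ⟨l1, l2, r, rfl⟩ : ∃ l1 l2 r, lam = l1 :: l2 :: r := by
    match lam, hcol2 with
    | x :: y :: r, _ => exact ⟨x, y, r, rfl⟩
  simp only [List.headD_cons, List.getD_cons_succ, List.getD_cons_zero] at *
  rw [List.pairwise_cons] at hsort
  obtain ⟨h1ge, hsort2⟩ := hsort
  rw [List.pairwise_cons] at hsort2
  obtain ⟨h2ge, _⟩ := hsort2
  have hl2pos : 0 < l2 := hpos l2 (by simp)
  have hl12 : l2 ≤ l1 := h1ge l2 (by simp)
  have hsum' : l1 + l2 + r.sum = n := by rw [List.sum_cons, List.sum_cons] at hsum_eq; omega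
  have hl2n : l1 + l2 ≤ n := by omega
  have htn : n < l1 + k := by exact_mod_cast by linarith [ht]
  have ha2 : 2 ≤ a := hdgt i0
  have hstep : ∀ m (hm : m < k), a + m ≤ d ⟨m, hm⟩ := by
    intro m
    induction m with
    | zero => intro hm; simp [ha, hi0]
    | succ m ihm =>
      intro hm
      have hmk : m < k := by omega
      have h1 := hdmono (show (⟨m, hmk⟩ : Fin k) < ⟨m + 1, hm⟩ by simp [Fin.lt_def])
      have h2 := ihm hmk
      omega
  have hged : ∑ i : Fin k, (a + (i : ℕ)) ≤ ∑ i, d i :=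
    Finset.sum_le_sum (fun i _ => hstep i.val i.isLt)
  have hsplit : ∑ i : Fin k, (a + (i : ℕ)) = k * a + ∑ i ∈ Finset.range k, i := by
    rw [Finset.sum_add_distrib, Finset.sum_const, Finset.card_univ, Fintype.card_fin,
      smul_eq_mul]
    congr 1
    exact Fin.sum_univ_eq_sum_range (fun i => i) k
  have hgauss : (∑ i ∈ Finset.range k, i) * 2 = k * (k - 1) := Finset.sum_range_id_mul_two k
  have hbig : 2 * (k * a) + k * (k - 1) ≤ 2 * n := by
    have : k * a + ∑ i ∈ Finset.range k, i ≤ n := by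
      rw [← hsplit]; exact le_trans hged hsum
    omega
  have key : l2 + a ≤ l1 := by
    by_contra hcon
    push_neg at hcon
    have hnk : n + 3 ≤ 2 * k + a := by omega
    have hK2 : (2 : ℤ) ≤ (k : ℤ) := by exact_mod_cast hk
    have hA2 : (2 : ℤ) ≤ (a : ℤ) := by exact_mod_cast ha2
    have hB : 2 * ((k : ℤ) * a) + k * (k - 1) ≤ 2 * n := by
      have h := hbig
      zify at h
      rw [Nat.cast_sub (by omega : 1 ≤ k)] at h
      push_cast at h ⊢
      linarith
    have hN : (n : ℤ) + 3 ≤ 2 * k + a := by exact_mod_cast hnk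
    nlinarith [mul_nonneg (by linarith : (0:ℤ) ≤ (k:ℤ) - 2) (by linarith : (0:ℤ) ≤ (a:ℤ) - 2),
      sq_nonneg ((k:ℤ) - 2)]
  constructor
  · push_cast
    omega
  · have hμ' : μ = (l1 - a) :: l2 :: r := by
      rw [hμ]
      exact iterate_removeFirstCorner a l1 (l2 :: r) (by omega)
        (fun x hx => hpos x (List.mem_cons_of_mem _ hx))
        (fun x hx => by
          rcases List.mem_cons.mp hx with h | h
          · omega
          · have := h2ge x h; omega)
    rw [hμ']
    simp only [List.headD_cons]
    have hal : a ≤ l1 := by omega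
    push_cast [Nat.cast_sub hal]
    omega
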